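/- If both d(t) and h(t) are formal power series with nonnegative coefficients whose coefficient sequences are Pólya frequency sequences (and h(0)=0), then the Riordan array R(d(t), h(t)) is totally positive. -/

import Mathlib

open PowerSeries

noncomputable section

/-- An infinite real matrix is totally positive if every finite minor
(with strictly increasing row and column indices) is nonnegative. -/
def TotallyPos (M : ℕ → ℕ → ℝ) : Prop :=
  ∀ (k : ℕ) (r c : Fin k → ℕ), StrictMono r → StrictMono c →
    0 ≤ (Matrix.of fun i j => M (r i) (c j)).det

/-- The Riordan array R(d(t), h(t)): entry (n,k) is the coefficient of t^n in d * h^k. -/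
def riordan (d h : PowerSeries ℝ) (n k : ℕ) : ℝ :=
  PowerSeries.coeff (R := ℝ) n (d * h ^ k)

/-- The lower triangular Toeplitz matrix of a sequence. -/
def toeplitz (a : ℕ → ℝ) (i j : ℕ) : ℝ :=
  if j ≤ i then a (i - j) else 0

/-- The Hessenberg matrix: first column (d₀,d₁,…), and entry (i,j) = h_{i-j+1} for j ≥ 1. -/
def hess (d h : ℕ → ℝ) (i j : ℕ) : ℝ :=
  if j = 0 then d i else if j ≤ i + 1 then h (i + 1 - j) else 0

open Finset Matrix Equiv
open scoped Classical

lemma det_rows_sum {k n : ℕ} (A : Matrix (Fin k) (Fin n) ℝ) (B : Matrix (Fin n) (Fin k) ℝ) :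
    (A * B).det = ∑ f : Fin k → Fin n, (∏ i, A i (f i)) * (B.submatrix f id).det := by
  have h2 := (Matrix.detRowAlternating (R := ℝ) (n := Fin k)).toMultilinearMap.map_sum
      (g := fun (i : Fin k) (m : Fin n) => A i m • B m)
  have h1 : (A * B).det = ((Matrix.detRowAlternating (R := ℝ) (n := Fin k)).toMultilinearMap
      (fun i => ∑ m, A i m • B m)) := by
    have harg : (A * B) = Matrix.of (fun i => ∑ m, A i m • B m) := by
      ext i j
      simp [Matrix.mul_apply, Finset.sum_apply]
    rw [harg]
    rfl
  rw [h1, h2]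
  refine Finset.sum_congr rfl fun f _ => ?_
  have h3 : ((Matrix.detRowAlternating (R := ℝ) (n := Fin k)).toMultilinearMap
      (fun i => A i (f i) • B (f i)))
      = Matrix.det (Matrix.of fun i j => A i (f i) * (B.submatrix f id) i j) := rfl
  rw [h3]
  exact Matrix.det_mul_column (fun i => A i (f i)) (B.submatrix f id)

lemma sort_comp_strictMono {k n : ℕ} {g : Fin k → Fin n} (hg : StrictMono g)
    (σ : Equiv.Perm (Fin k)) : Tuple.sort (g ∘ σ) = σ⁻¹ := by
  have h1 : (g ∘ σ) ∘ Tuple.sort (g ∘ σ) = g ∘ Tuple.sort g :=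
    Tuple.comp_perm_comp_sort_eq_comp_sort
  have h2 : Tuple.sort g = Equiv.refl _ := Tuple.sort_eq_refl_iff_monotone.2 hg.monotone
  rw [h2] at h1
  have h3 : ∀ i, g (σ (Tuple.sort (g ∘ σ) i)) = g i := fun i => congrFun h1 i
  ext i
  have := hg.injective (h3 i)
  have h4 := congrArg σ.symm this
  simp only [Equiv.symm_apply_apply] at h4
  rw [h4]; rfl

lemma cauchy_binet {k n : ℕ} (A : Matrix (Fin k) (Fin n) ℝ) (B : Matrix (Fin n) (Fin k) ℝ) :
    (A * B).det = ∑ f ∈ Finset.univ.filter (fun f : Fin k → Fin n => StrictMono f),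
      (A.submatrix id f).det * (B.submatrix f id).det := by
  rw [det_rows_sum]
  rw [← Finset.sum_filter_add_sum_filter_not Finset.univ
    (fun f : Fin k → Fin n => Function.Injective f)]
  have hnon : ∑ f ∈ Finset.univ.filter (fun f : Fin k → Fin n => ¬ Function.Injective f),
      (∏ i, A i (f i)) * (B.submatrix f id).det = 0 := by
    refine Finset.sum_eq_zero fun f hf => ?_
    rw [Finset.mem_filter] at hf
    simp only [Function.Injective] at hf
    push_neg at hf
    obtain ⟨i, j, hij, hne⟩ := hf.2
    have : (B.submatrix f id).det = 0 :=
      Matrix.det_zero_of_row_eq hne (by ext j'; simp [hij])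
    rw [this, mul_zero]
  rw [hnon, add_zero]
  have hR : ∀ g : Fin k → Fin n, StrictMono g →
      (A.submatrix id g).det * (B.submatrix g id).det
      = ∑ σ : Equiv.Perm (Fin k), (∏ i, A i ((g ∘ σ) i)) * (B.submatrix (g ∘ σ) id).det := by
    intro g hg
    rw [← Matrix.det_transpose (A.submatrix id g), Matrix.det_apply', Finset.sum_mul]
    refine Finset.sum_congr rfl fun σ _ => ?_
    have hperm : (B.submatrix (g ∘ σ) id).det
        = (Equiv.Perm.sign σ : ℝ) * (B.submatrix g id).det := by
      have h5 : B.submatrix (g ∘ σ) id = (B.submatrix g id).submatrix σ id := rfl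
      rw [h5, Matrix.det_permute]
    have h6 : ∀ i, (A.submatrix id g).transpose (σ i) i = A i ((g ∘ σ) i) := fun i => rfl
    simp only [h6, hperm]
    ring
  calc ∑ f ∈ Finset.univ.filter (fun f : Fin k → Fin n => Function.Injective f),
        (∏ i, A i (f i)) * (B.submatrix f id).det
      = ∑ p ∈ (Finset.univ.filter (fun f : Fin k → Fin n => StrictMono f)) ×ˢ
          (Finset.univ : Finset (Equiv.Perm (Fin k))),
        (∏ i, A i ((p.1 ∘ p.2) i)) * (B.submatrix (p.1 ∘ p.2) id).det := by
        refine Finset.sum_nbij' (i := fun f => (f ∘ Tuple.sort f, (Tuple.sort f)⁻¹))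
          (j := fun p => p.1 ∘ p.2) ?_ ?_ ?_ ?_ ?_
        · intro f hf
          simp only [Finset.mem_filter, Finset.mem_univ, true_and] at hf ⊢
          rw [Finset.mem_product]
          refine ⟨?_, Finset.mem_univ _⟩
          simp only [Finset.mem_filter, Finset.mem_univ, true_and]
          exact (Tuple.monotone_sort f).strictMono_of_injective
            (hf.comp (Equiv.injective _))
        · intro p hp
          rw [Finset.mem_product] at hp
          simp only [Finset.mem_filter, Finset.mem_univ, true_and] at hp ⊢
          exact hp.1.injective.comp (Equiv.injective _)
        · intro f hf
          funext x
          simp [Function.comp, Equiv.Perm.coe_inv]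
        · intro p hp
          rw [Finset.mem_product] at hp
          simp only [Finset.mem_filter, Finset.mem_univ, true_and] at hp
          have hs := sort_comp_strictMono hp.1 p.2
          ext x
          · simp [hs, Function.comp]
          · simp [hs]
        · intro f hf
          have : (f ∘ Tuple.sort f) ∘ ((Tuple.sort f)⁻¹ : Equiv.Perm (Fin k)) = f := by
            funext x; simp [Function.comp, Equiv.Perm.coe_inv]
          rw [this]
    _ = ∑ g ∈ Finset.univ.filter (fun f : Fin k → Fin n => StrictMono f),
        ∑ σ : Equiv.Perm (Fin k), (∏ i, A i ((g ∘ σ) i)) * (B.submatrix (g ∘ σ) id).det := by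
        rw [Finset.sum_product]
    _ = ∑ f ∈ Finset.univ.filter (fun f : Fin k → Fin n => StrictMono f),
        (A.submatrix id f).det * (B.submatrix f id).det := by
        refine Finset.sum_congr rfl fun g hg => ?_
        simp only [Finset.mem_filter] at hg
        exact (hR g hg.2).symm

lemma det_zero_of_block {k : ℕ} (M : Matrix (Fin k) (Fin k) ℝ) (i₀ : Fin k)
    (hM : ∀ i j, i ≤ i₀ → i₀ ≤ j → M i j = 0) : M.det = 0 := by
  rw [Matrix.det_apply']
  refine Finset.sum_eq_zero fun σ _ => ?_
  obtain ⟨i, hi, hii⟩ : ∃ i, i ≤ i₀ ∧ i₀ ≤ σ⁻¹ i := by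
    by_contra hc
    push_neg at hc
    have h1 : (Finset.Iic i₀).image (σ⁻¹ : Equiv.Perm (Fin k)) ⊆ Finset.Iio i₀ := by
      intro x hx
      simp only [Finset.mem_image, Finset.mem_Iic] at hx
      obtain ⟨y, hy, rfl⟩ := hx
      exact Finset.mem_Iio.2 (hc y hy)
    have h2 := Finset.card_le_card h1
    rw [Finset.card_image_of_injective _ (Equiv.injective _)] at h2
    have h3 : Finset.Iio i₀ ⊂ Finset.Iic i₀ := by
      refine Finset.ssubset_iff_of_subset (fun x hx => ?_) |>.2
        ⟨i₀, Finset.mem_Iic.2 le_rfl, by simp⟩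
      exact Finset.mem_Iic.2 (le_of_lt (Finset.mem_Iio.1 hx))
    exact absurd h2 (not_le.2 (Finset.card_lt_card h3))
  have hz : M (σ (σ⁻¹ i)) (σ⁻¹ i) = 0 := by
    rw [show σ (σ⁻¹ i) = i from σ.apply_symm_apply i]
    exact hM i (σ⁻¹ i) hi hii
  have hp : (∏ j, M (σ j) j) = 0 := Finset.prod_eq_zero (Finset.mem_univ (σ⁻¹ i)) hz
  rw [hp, mul_zero]

lemma coeff_mul_expand (x y : PowerSeries ℝ) {n R : ℕ} (hn : n ≤ R) :
    coeff (R := ℝ) n (x * y) = ∑ m : Fin (R + 1),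
      (if (m : ℕ) ≤ n then coeff (R := ℝ) (n - (m : ℕ)) y else 0) * coeff (R := ℝ) (m : ℕ) x := by
  rw [Fin.sum_univ_eq_sum_range (fun m => (if m ≤ n then coeff (R := ℝ) (n - m) y else 0) * coeff (R := ℝ) m x)]
  rw [PowerSeries.coeff_mul, Finset.Nat.sum_antidiagonal_eq_sum_range_succ_mk]
  rw [← Finset.sum_subset (Finset.range_subset_range.2 (by omega) :
      Finset.range (n + 1) ⊆ Finset.range (R + 1))]
  · refine Finset.sum_congr rfl fun m hm => ?_
    rw [Finset.mem_range] at hm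
    rw [if_pos (by omega)]
    ring
  · intro m _ hm
    rw [Finset.mem_range, not_lt] at hm
    rw [if_neg (by omega), zero_mul]

lemma riordan_one_TP (h : PowerSeries ℝ) (h0 : constantCoeff (R := ℝ) h = 0)
    (hhPF : TotallyPos (toeplitz (fun n => coeff (R := ℝ) n h))) :
    ∀ N k (r c : Fin k → ℕ), StrictMono r → StrictMono c →
      k + (∑ i, r i) + (∑ j, c j) ≤ N →
      0 ≤ (Matrix.of fun i j => coeff (R := ℝ) (r i) (h ^ (c j))).det := by
  intro N
  induction N using Nat.strong_induction_on with
  | _ N ih =>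
  intro k r c hr hc hN
  match k with
  | 0 => simp
  | (k' + 1) =>
  by_cases hc0 : c 0 = 0
  · by_cases hr0 : r 0 = 0
    · -- expand along column zero
      set M : Matrix (Fin (k' + 1)) (Fin (k' + 1)) ℝ :=
        Matrix.of fun i j => coeff (R := ℝ) (r i) (h ^ (c j)) with hM
      have hcol : ∀ i : Fin (k' + 1), i ≠ 0 → M i 0 = 0 := by
        intro i hi
        have hri : r i ≠ 0 := by
          have := hr (Fin.pos_of_ne_zero hi)
          omega
        simp [hM, hc0, PowerSeries.coeff_one, hri]
      have hdet := Matrix.det_succ_column_zero M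
      have hsum : ∑ i : Fin (k' + 1), (-1) ^ (i : ℕ) * M i 0
          * (M.submatrix i.succAbove Fin.succ).det
          = (-1) ^ ((0 : Fin (k' + 1)) : ℕ) * M 0 0
            * (M.submatrix (Fin.succAbove 0) Fin.succ).det := by
        refine Finset.sum_eq_single 0 (fun i _ hi => ?_) (fun hu => absurd (Finset.mem_univ _) hu)
        rw [hcol i hi]
        ring
      have hM00 : M 0 0 = 1 := by simp [hM, hc0, PowerSeries.coeff_one, hr0]
      rw [hdet, hsum, hM00]
      simp only [Fin.val_zero, pow_zero, one_mul, mul_one, Fin.succAbove_zero]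
      have hmono1 : StrictMono (fun i : Fin k' => r i.succ) :=
        fun a b hab => hr (Fin.succ_lt_succ_iff.2 hab)
      have hmono2 : StrictMono (fun j : Fin k' => c j.succ) :=
        fun a b hab => hc (Fin.succ_lt_succ_iff.2 hab)
      have hmeas : k' + (∑ i : Fin k', r i.succ) + (∑ j : Fin k', c j.succ) < N := by
        have h1 : (∑ i : Fin (k' + 1), r i) = r 0 + ∑ i : Fin k', r i.succ :=
          Fin.sum_univ_succ _
        have h2 : (∑ j : Fin (k' + 1), c j) = c 0 + ∑ j : Fin k', c j.succ :=
          Fin.sum_univ_succ _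
        omega
      have := ih _ hmeas k' (fun i => r i.succ) (fun j => c j.succ) hmono1 hmono2 le_rfl
      exact this
    · have hz : (Matrix.of fun i j => coeff (R := ℝ) (r i) (h ^ (c j))).det = 0 := by
        apply Matrix.det_eq_zero_of_column_eq_zero 0
        intro i
        have hri : r i ≠ 0 := by
          rcases eq_or_ne i 0 with rfl | hi
          · exact hr0
          · have := hr (Fin.pos_of_ne_zero hi)
            omega
        simp [hc0, PowerSeries.coeff_one, hri]
      rw [hz]
  · -- all column indices are ≥ 1 : factor through the Toeplitz matrix of h
    have hcpos : ∀ j, 1 ≤ c j := by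
      intro j
      rcases eq_or_ne j 0 with rfl | hj
      · omega
      · have := hc (Fin.pos_of_ne_zero hj)
        omega
    set R := r (Fin.last k') with hRdef
    set A : Matrix (Fin (k' + 1)) (Fin (R + 1)) ℝ :=
      Matrix.of fun i m => toeplitz (fun n => coeff (R := ℝ) n h) (r i) (m : ℕ) with hA
    set B : Matrix (Fin (R + 1)) (Fin (k' + 1)) ℝ :=
      Matrix.of fun m j => coeff (R := ℝ) (m : ℕ) (h ^ (c j - 1)) with hB
    have hMAB : (Matrix.of fun i j => coeff (R := ℝ) (r i) (h ^ (c j))) = A * B := by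
      ext i j
      rw [Matrix.mul_apply]
      have hcj : h ^ (c j) = h ^ (c j - 1) * h := by
        rw [← pow_succ]
        congr 1
        have := hcpos j
        omega
      rw [Matrix.of_apply, hcj,
        coeff_mul_expand (h ^ (c j - 1)) h (hr.monotone (Fin.le_last i))]
      refine Finset.sum_congr rfl fun m _ => ?_
      simp [hA, hB, toeplitz]
    rw [hMAB, cauchy_binet]
    refine Finset.sum_nonneg fun f hf => ?_
    simp only [Finset.mem_filter, Finset.mem_univ, true_and] at hf
    by_cases hfa : ∀ i, (f i : ℕ) ≤ r i
    · refine mul_nonneg ?_ ?_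
      · have hfm : StrictMono (fun i => ((f i : ℕ))) := fun a b hab => hf hab
        exact hhPF (k' + 1) r (fun i => (f i : ℕ)) hr hfm
      · have hfm : StrictMono (fun i => ((f i : ℕ))) := fun a b hab => hf hab
        have hcm : StrictMono (fun j => c j - 1) := by
          intro a b hab
          have h1 := hc hab
          have h2 := hcpos a
          show c a - 1 < c b - 1
          omega
        have hmeas : (k' + 1) + (∑ i, ((f i : ℕ))) + (∑ j, (c j - 1)) < N := by
          have h1 : (∑ i, ((f i : ℕ))) ≤ ∑ i, r i := Finset.sum_le_sum fun i _ => hfa i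
          have h2 : (∑ j, (c j - 1)) + (k' + 1) = ∑ j : Fin (k' + 1), c j := by
            have h3 : ∑ j : Fin (k' + 1), c j = ∑ j : Fin (k' + 1), ((c j - 1) + 1) :=
              Finset.sum_congr rfl fun j _ => by have := hcpos j; omega
            rw [h3, Finset.sum_add_distrib]
            simp
          omega
        exact ih _ hmeas (k' + 1) (fun i => (f i : ℕ)) (fun j => c j - 1) hfm hcm le_rfl
    · push_neg at hfa
      obtain ⟨i₀, hi₀⟩ := hfa
      have hAz : (A.submatrix id f).det = 0 := by
        apply det_zero_of_block _ i₀
        intro i j hi hj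
        have h1 : (r i₀ : ℕ) < (f j : ℕ) := lt_of_lt_of_le hi₀ (hf.monotone hj)
        have h2 : r i ≤ r i₀ := hr.monotone hi
        simp only [hA, Matrix.submatrix_apply, id_eq, Matrix.of_apply, toeplitz]
        rw [if_neg (by omega)]
      rw [hAz, zero_mul]

theorem stmt10 (d h : PowerSeries ℝ) (h0 : constantCoeff (R := ℝ) h = 0)
    (hd0 : ∀ n, 0 ≤ coeff (R := ℝ) n d) (hh0 : ∀ n, 0 ≤ coeff (R := ℝ) n h)
    (hdPF : TotallyPos (toeplitz (fun n => coeff (R := ℝ) n d)))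
    (hhPF : TotallyPos (toeplitz (fun n => coeff (R := ℝ) n h))) :
    TotallyPos (riordan d h) := by
  intro k r c hr hc
  match k with
  | 0 => simp
  | (k' + 1) =>
  set R := r (Fin.last k') with hRdef
  set A : Matrix (Fin (k' + 1)) (Fin (R + 1)) ℝ :=
    Matrix.of fun i m => toeplitz (fun n => coeff (R := ℝ) n d) (r i) (m : ℕ) with hA
  set B : Matrix (Fin (R + 1)) (Fin (k' + 1)) ℝ :=
    Matrix.of fun m j => coeff (R := ℝ) (m : ℕ) (h ^ (c j)) with hB
  have hMAB : (Matrix.of fun i j => riordan d h (r i) (c j)) = A * B := by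
    ext i j
    rw [Matrix.mul_apply, Matrix.of_apply]
    show coeff (R := ℝ) (r i) (d * h ^ (c j)) = _
    rw [mul_comm d (h ^ (c j)),
      coeff_mul_expand (h ^ (c j)) d (hr.monotone (Fin.le_last i))]
    refine Finset.sum_congr rfl fun m _ => ?_
    simp [hA, hB, toeplitz]
  rw [hMAB, cauchy_binet]
  refine Finset.sum_nonneg fun f hf => ?_
  simp only [Finset.mem_filter, Finset.mem_univ, true_and] at hf
  have hfm : StrictMono (fun i => ((f i : ℕ))) := fun a b hab => hf hab
  refine mul_nonneg ?_ ?_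
  · exact hdPF (k' + 1) r (fun i => (f i : ℕ)) hr hfm
  · exact riordan_one_TP h h0 hhPF
      ((k' + 1) + (∑ i, ((f i : ℕ))) + (∑ j, c j)) (k' + 1)
      (fun i => (f i : ℕ)) c hfm hc le_rfl

end
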